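/- In the infinite-dimensional *-representation σ of A(S⁴_q) on ℓ²(ℕ×ℕ) defined by t|m,n⟩ = q^{2m+4n+4}|m,n⟩, ā|m,n⟩ = (1−q^{2m+2})^{1/2}q^{m+2n+1}|m+1,n⟩, a|m,n⟩ = (1−q^{2m})^{1/2}q^{m+2n}|m−1,n⟩, b|m,n⟩ = (1−q^{4n+4})^{1/2}q^{2(m+n+2)}|m,n+1⟩, b̄|m,n⟩ = (1−q^{4n})^{1/2}q^{2(m+n+1)}|m,n−1⟩ (with 0 < q < 1), all defining relations of A(S⁴_q) are satisfied: ab = q⁴ba, āb = bā, ta = q⁻²at, tb = q⁴bt, aā+bb̄ = q⁻²t(1−q⁻²t), q⁴āa+q⁻⁴b̄b = t(1−t), bb̄−q⁻⁴b̄b = (1−q⁻⁴)t². -/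
import Mathlib

private lemma ext11 {f g : (ℕ × ℕ →₀ ℂ) →ₗ[ℂ] (ℕ × ℕ →₀ ℂ)}
    (h : ∀ m n : ℕ, f (Finsupp.single (m, n) 1) = g (Finsupp.single (m, n) 1)) : f = g := by
  refine Finsupp.lhom_ext fun p c => ?_
  have hp : Finsupp.single p c = c • Finsupp.single p 1 := by
    rw [Finsupp.smul_single, smul_eq_mul, mul_one]
  rw [hp, map_smul, map_smul, h p.1 p.2]

/-- In the infinite-dimensional `*`-representation `σ` of `A(S⁴_q)`
on `ℓ²(ℕ×ℕ)` (here presented on the span of the orthonormal basis `|m,n⟩`,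
modelled as finitely supported functions) defined by
`t|m,n⟩ = q^{2m+4n+4}|m,n⟩`,
`ā|m,n⟩ = (1−q^{2m+2})^{1/2} q^{m+2n+1} |m+1,n⟩`,
`a|m,n⟩ = (1−q^{2m})^{1/2} q^{m+2n} |m−1,n⟩`,
`b|m,n⟩ = (1−q^{4n+4})^{1/2} q^{2(m+n+2)} |m,n+1⟩`,
`b̄|m,n⟩ = (1−q^{4n})^{1/2} q^{2(m+n+1)} |m,n−1⟩` (with `0 < q < 1`),
all defining relations of `A(S⁴_q)` are satisfied. -/
theorem stmt_17 (q : ℝ) (hq0 : 0 < q) (hq1 : q < 1)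
    (T Aop Abar Bop Bbar : (ℕ × ℕ →₀ ℂ) →ₗ[ℂ] (ℕ × ℕ →₀ ℂ))
    (hT : ∀ m n : ℕ, T (Finsupp.single (m, n) 1)
      = ((q ^ (2*m + 4*n + 4) : ℝ) : ℂ) • Finsupp.single (m, n) 1)
    (hAbar : ∀ m n : ℕ, Abar (Finsupp.single (m, n) 1)
      = ((Real.sqrt (1 - q ^ (2*m + 2)) * q ^ (m + 2*n + 1) : ℝ) : ℂ) •
          Finsupp.single (m + 1, n) 1)
    (hA0 : ∀ n : ℕ, Aop (Finsupp.single (0, n) 1) = 0)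
    (hA : ∀ m n : ℕ, Aop (Finsupp.single (m + 1, n) 1)
      = ((Real.sqrt (1 - q ^ (2*(m + 1))) * q ^ ((m + 1) + 2*n) : ℝ) : ℂ) •
          Finsupp.single (m, n) 1)
    (hB : ∀ m n : ℕ, Bop (Finsupp.single (m, n) 1)
      = ((Real.sqrt (1 - q ^ (4*n + 4)) * q ^ (2*(m + n + 2)) : ℝ) : ℂ) •
          Finsupp.single (m, n + 1) 1)
    (hBbar0 : ∀ m : ℕ, Bbar (Finsupp.single (m, 0) 1) = 0)
    (hBbar : ∀ m n : ℕ, Bbar (Finsupp.single (m, n + 1) 1)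
      = ((Real.sqrt (1 - q ^ (4*(n + 1))) * q ^ (2*(m + (n + 1) + 1)) : ℝ) : ℂ) •
          Finsupp.single (m, n) 1) :
    Aop ∘ₗ Bop = ((q : ℂ) ^ 4) • (Bop ∘ₗ Aop) ∧
    Abar ∘ₗ Bop = Bop ∘ₗ Abar ∧
    T ∘ₗ Aop = ((q : ℂ)⁻¹ ^ 2) • (Aop ∘ₗ T) ∧
    T ∘ₗ Bop = ((q : ℂ) ^ 4) • (Bop ∘ₗ T) ∧
    Aop ∘ₗ Abar + Bop ∘ₗ Bbar = ((q : ℂ)⁻¹ ^ 2) • T - ((q : ℂ)⁻¹ ^ 4) • (T ∘ₗ T) ∧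
    ((q : ℂ) ^ 4) • (Abar ∘ₗ Aop) + ((q : ℂ)⁻¹ ^ 4) • (Bbar ∘ₗ Bop)
      = T - T ∘ₗ T ∧
    Bop ∘ₗ Bbar - ((q : ℂ)⁻¹ ^ 4) • (Bbar ∘ₗ Bop)
      = (1 - (q : ℂ)⁻¹ ^ 4) • (T ∘ₗ T) := by
  have hq : q ≠ 0 := hq0.ne'
  have hqC : (q : ℂ) ≠ 0 := Complex.ofReal_ne_zero.mpr hq
  have key : ∀ k : ℕ, 0 ≤ 1 - q ^ k := fun k => by
    have := pow_le_one₀ hq0.le hq1.le (n := k); linarith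
  -- composite scalar computations
  have hAA : ∀ m n : ℕ, Aop (Abar (Finsupp.single (m, n) 1))
      = (((1 - q^(2*m+2)) * q^(2*m+4*n+2) : ℝ) : ℂ) • Finsupp.single (m, n) 1 := by
    intro m n
    rw [hAbar, map_smul, hA m n, smul_smul]
    congr 1
    have h := Real.mul_self_sqrt (key (2*m+2))
    have hr : (Real.sqrt (1 - q^(2*m+2)) * q^(m+2*n+1)) *
        (Real.sqrt (1 - q^(2*(m+1))) * q^((m+1)+2*n))
        = (1 - q^(2*m+2)) * q^(2*m+4*n+2) := by
      rw [show 2*(m+1) = 2*m+2 from by ring]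
      linear_combination (q^(m+2*n+1) * q^((m+1)+2*n)) * h
    exact_mod_cast hr
  have hAA' : ∀ m n : ℕ, Abar (Aop (Finsupp.single (m, n) 1))
      = (((1 - q^(2*m)) * q^(2*m+4*n) : ℝ) : ℂ) • Finsupp.single (m, n) 1 := by
    intro m n
    cases m with
    | zero => rw [hA0, map_zero]; norm_num
    | succ k =>
      rw [hA k n, map_smul, hAbar k n, smul_smul]
      congr 1
      have h := Real.mul_self_sqrt (key (2*k+2))
      have hr : (Real.sqrt (1 - q^(2*(k+1))) * q^((k+1)+2*n)) *
          (Real.sqrt (1 - q^(2*k+2)) * q^(k+2*n+1))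
          = (1 - q^(2*(k+1))) * q^(2*(k+1)+4*n) := by
        rw [show 2*(k+1) = 2*k+2 from by ring]
        linear_combination (q^((k+1)+2*n) * q^(k+2*n+1)) * h
      exact_mod_cast hr
  have hBB : ∀ m n : ℕ, Bop (Bbar (Finsupp.single (m, n) 1))
      = (((1 - q^(4*n)) * q^(4*(m+n+1)) : ℝ) : ℂ) • Finsupp.single (m, n) 1 := by
    intro m n
    cases n with
    | zero => rw [hBbar0, map_zero]; norm_num
    | succ k =>
      rw [hBbar, map_smul, hB m k, smul_smul]
      congr 1
      have h := Real.mul_self_sqrt (key (4*k+4))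
      have hr : (Real.sqrt (1 - q^(4*(k+1))) * q^(2*(m+(k+1)+1))) *
          (Real.sqrt (1 - q^(4*k+4)) * q^(2*(m+k+2)))
          = (1 - q^(4*(k+1))) * q^(4*(m+(k+1)+1)) := by
        rw [show 4*(k+1) = 4*k+4 from by ring]
        linear_combination (q^(2*(m+(k+1)+1)) * q^(2*(m+k+2))) * h
      exact_mod_cast hr
  have hBB' : ∀ m n : ℕ, Bbar (Bop (Finsupp.single (m, n) 1))
      = (((1 - q^(4*n+4)) * q^(4*(m+n+2)) : ℝ) : ℂ) • Finsupp.single (m, n) 1 := by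
    intro m n
    rw [hB, map_smul, hBbar m n, smul_smul]
    congr 1
    have h := Real.mul_self_sqrt (key (4*n+4))
    have hr : (Real.sqrt (1 - q^(4*n+4)) * q^(2*(m+n+2))) *
        (Real.sqrt (1 - q^(4*(n+1))) * q^(2*(m+(n+1)+1)))
        = (1 - q^(4*n+4)) * q^(4*(m+n+2)) := by
      rw [show 4*(n+1) = 4*n+4 from by ring]
      linear_combination (q^(2*(m+n+2)) * q^(2*(m+(n+1)+1))) * h
    exact_mod_cast hr
  have hTT : ∀ m n : ℕ, T (T (Finsupp.single (m, n) 1))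
      = ((q^(4*m+8*n+8) : ℝ) : ℂ) • Finsupp.single (m, n) 1 := by
    intro m n
    rw [hT, map_smul, hT, smul_smul]
    congr 1
    have hr : q^(2*m+4*n+4) * q^(2*m+4*n+4) = q^(4*m+8*n+8) := by ring
    exact_mod_cast hr
  refine ⟨?_, ?_, ?_, ?_, ?_, ?_, ?_⟩
  · -- ab = q⁴ ba
    apply ext11; intro m n
    simp only [LinearMap.comp_apply, LinearMap.smul_apply]
    cases m with
    | zero => rw [hB, map_smul, hA0, smul_zero, hA0, map_zero, smul_zero]
    | succ k =>
      rw [hB, map_smul, hA k (n+1), hA k n, map_smul, hB]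
      simp only [smul_smul]
      congr 1
      push_cast
      ring
  · -- āb = bā
    apply ext11; intro m n
    simp only [LinearMap.comp_apply]
    rw [hB, map_smul, hAbar m (n+1), hAbar m n, map_smul, hB]
    simp only [smul_smul]
    congr 1
    push_cast
    ring
  · -- ta = q⁻² at
    apply ext11; intro m n
    simp only [LinearMap.comp_apply, LinearMap.smul_apply]
    cases m with
    | zero => rw [hA0, map_zero, hT, map_smul, hA0, smul_zero, smul_zero]
    | succ k =>
      rw [hA k n, map_smul, hT, hT, map_smul, hA k n]
      simp only [smul_smul]
      congr 1
      push_cast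
      field_simp
      ring
  · -- tb = q⁴ bt
    apply ext11; intro m n
    simp only [LinearMap.comp_apply, LinearMap.smul_apply]
    rw [hB, map_smul, hT, hT, map_smul, hB]
    simp only [smul_smul]
    congr 1
    push_cast
    ring
  · -- aā + bb̄ = q⁻²t − q⁻⁴t²
    apply ext11; intro m n
    simp only [LinearMap.add_apply, LinearMap.sub_apply, LinearMap.comp_apply,
      LinearMap.smul_apply]
    rw [hAA, hBB, hTT, hT]
    simp only [smul_smul]
    rw [← add_smul, ← sub_smul]
    congr 1
    push_cast
    field_simp
    ring
  · -- q⁴āa + q⁻⁴b̄b = t − t²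
    apply ext11; intro m n
    simp only [LinearMap.add_apply, LinearMap.sub_apply, LinearMap.comp_apply,
      LinearMap.smul_apply]
    rw [hAA', hBB', hTT, hT]
    simp only [smul_smul]
    rw [← add_smul, ← sub_smul]
    congr 1
    push_cast
    field_simp
    ring
  · -- bb̄ − q⁻⁴ b̄b = (1−q⁻⁴) t²
    apply ext11; intro m n
    simp only [LinearMap.sub_apply, LinearMap.comp_apply, LinearMap.smul_apply]
    rw [hBB, hBB', hTT]
    simp only [smul_smul]
    rw [← sub_smul]
    congr 1
    push_cast
    field_simp
    ring
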